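/- If w contains the pattern 3412 at positions i_1 < i_2 < i_3 < i_4 (so w(i_3) < w(i_4) < w(i_1) < w(i_2)), then the pair (e, w) is divisible after position i_2, i.e. |{1,...,i_2} ∩ {w(1),...,w(i_2)}| ≤ i_2 - 2. -/
import Mathlib


open Equiv

/-- one-line notation (1-based values) of a permutation of `Fin n` -/
def oneLine {n : ℕ} (w : Perm (Fin n)) : List ℕ := List.ofFn fun i => (w i).val + 1

/-- `w` contains the pattern given by the list `p` (distinct positive integers
in one-line notation): some subsequence of `w` has the same relative order. -/
def ContainsPat {n : ℕ} (w : Perm (Fin n)) (p : List ℕ) : Prop :=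
  ∃ f : Fin p.length → Fin n, StrictMono f ∧
    ∀ i j : Fin p.length, p.get i < p.get j ↔ w (f i) < w (f j)

/-- Coxeter length of a permutation = number of inversions -/
def len {n : ℕ} (w : Perm (Fin n)) : ℕ :=
  (Finset.univ.filter fun q : Fin n × Fin n => q.1 < q.2 ∧ w q.2 < w q.1).card

/-- the simple generators `s_i = (i, i+1)` that are left descents of `w` -/
def descentGens {n : ℕ} (w : Perm (Fin n)) : Set (Perm (Fin n)) :=
  {u | ∃ i j : Fin n, (i : ℕ) + 1 = (j : ℕ) ∧ u = Equiv.swap i j ∧ w⁻¹ j < w⁻¹ i}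

/-- `v` is the longest element `w₀(J(w))` of the parabolic subgroup generated by
the left descents of `w` -/
def IsW0J {n : ℕ} (w v : Perm (Fin n)) : Prop :=
  v ∈ Subgroup.closure (descentGens w) ∧
    ∀ u ∈ Subgroup.closure (descentGens w), len u ≤ len v

/-- `v[1,i]`: the set of values in the first `i` positions (`i` is 1-based) -/
def prefSet {n : ℕ} (v : Perm (Fin n)) (i : ℕ) : Finset (Fin n) :=
  (Finset.univ.filter fun j : Fin n => (j : ℕ) < i).image v

/-- `(v,w)` is divisible after position `i` : `|v[1,i] ∩ w[1,i]| ≤ i - 2` -/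
def DivisibleAfter {n : ℕ} (v w : Perm (Fin n)) (i : ℕ) : Prop :=
  (prefSet v i ∩ prefSet w i).card + 2 ≤ i

/-- `(v,w)` is divisible at position `i` : `v(i) = w(i)` and `|v[1,i] ∩ w[1,i]| ≤ i - 1` -/
def DivisibleAt {n : ℕ} (v w : Perm (Fin n)) (i : ℕ) : Prop :=
  ∃ h : i - 1 < n, v ⟨i - 1, h⟩ = w ⟨i - 1, h⟩ ∧ (prefSet v i ∩ prefSet w i).card + 1 ≤ i

/-- `(v,w)` is divisible at or after some position `1 ≤ i ≤ n` -/
def Divisible {n : ℕ} (v w : Perm (Fin n)) : Prop :=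
  ∃ i : ℕ, 1 ≤ i ∧ i ≤ n ∧ (DivisibleAfter v w i ∨ DivisibleAt v w i)

def pat321 : List ℕ := [3, 2, 1]
def pat3412 : List ℕ := [3, 4, 1, 2]

def P321L : List (List ℕ) :=
  [[2,4,5,3,1],[2,5,3,1,4],[2,5,3,4,1],[4,2,5,3,1],[4,5,2,3,1],[4,5,3,1,2],
   [5,2,3,1,4],[5,2,3,4,1],[5,3,1,2,4],[5,3,1,4,2],[5,3,4,1,2]]

def P3412L : List (List ℕ) :=
  [[3,4,5,1,2],[3,4,5,2,1],[3,5,4,1,2],[3,5,4,2,1],[4,5,1,2,3],[4,5,2,1,3],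
   [4,5,2,3,1],[5,3,4,1,2],[5,3,4,2,1],[5,4,1,2,3],[5,4,2,1,3],[5,4,2,3,1]]

def PL : List (List ℕ) :=
  [[2,4,5,3,1],[2,5,3,1,4],[2,5,3,4,1],[3,4,5,1,2],[3,4,5,2,1],[3,5,4,1,2],[3,5,4,2,1],
   [4,2,5,3,1],[4,5,1,2,3],[4,5,2,1,3],[4,5,2,3,1],[4,5,3,1,2],[5,2,3,1,4],[5,2,3,4,1],
   [5,3,1,2,4],[5,3,1,4,2],[5,3,4,1,2],[5,3,4,2,1],[5,4,1,2,3],[5,4,2,1,3],[5,4,2,3,1]]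

/-- Bruhat order: generated by covers `a ⋖ a·t` with `t` a transposition and
`ℓ(a·t) = ℓ(a) + 1` -/
def BruhatLE {n : ℕ} (v w : Perm (Fin n)) : Prop :=
  Relation.ReflTransGen
    (fun a b => (∃ x y : Fin n, x ≠ y ∧ b = a * Equiv.swap x y) ∧ len b = len a + 1) v w

/-- product of a word in the simple generators `s_i = (i, i+1)` -/
def wordProd {n : ℕ} (l : List {i : ℕ // i + 1 < n}) : Perm (Fin n) :=
  (l.map fun i => Equiv.swap (⟨i.1, Nat.lt_of_succ_lt i.2⟩ : Fin n) ⟨i.1 + 1, i.2⟩).prod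

/-- `l` is a reduced word for `w`: a minimal-length expression of `w` as a
product of simple generators -/
def IsReducedWord {n : ℕ} (w : Perm (Fin n)) (l : List {i : ℕ // i + 1 < n}) : Prop :=
  wordProd l = w ∧
    ∀ l' : List {i : ℕ // i + 1 < n}, wordProd l' = w → l.length ≤ l'.length

lemma card_filter_lt (n k : ℕ) (hk : k ≤ n) :
    (Finset.univ.filter fun j : Fin n => (j : ℕ) < k).card = k := by
  rw [← Fintype.card_fin k, ← Finset.card_univ]
  apply Finset.card_bij (fun (a : Fin n) ha => (⟨a, by simpa using (Finset.mem_filter.mp ha).2⟩ : Fin k))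
  · intros; simp
  · intro a ha b hb h; simpa [Fin.ext_iff] using h
  · intro b _; exact ⟨⟨b, lt_of_lt_of_le b.2 hk⟩, by simp [b.2], rfl⟩

lemma card_prefSet {n : ℕ} (v : Perm (Fin n)) (k : ℕ) (hk : k ≤ n) :
    (prefSet v k).card = k := by
  rw [prefSet, Finset.card_image_of_injective _ v.injective, card_filter_lt n k hk]

theorem stmt7 (n : ℕ) (w : Perm (Fin n)) (i₁ i₂ i₃ i₄ : Fin n)
    (h12 : i₁ < i₂) (h23 : i₂ < i₃) (h34 : i₃ < i₄)
    (h1 : w i₃ < w i₄) (h2 : w i₄ < w i₁) (h3 : w i₁ < w i₂) :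
    DivisibleAfter 1 w ((i₂ : ℕ) + 1) := by
  set k := (i₂ : ℕ) + 1 with hkdef
  have hkn : k ≤ n := i₂.2
  have hk2 : 2 ≤ k := by
    have : (0:ℕ) < (i₂:ℕ) := lt_of_le_of_lt (Nat.zero_le _) h12
    omega
  set A := prefSet (1 : Perm (Fin n)) k with hA
  set B := prefSet w k with hB
  have hAmem : ∀ x : Fin n, x ∈ A ↔ (x : ℕ) < k := by
    intro x; simp [hA, prefSet]
  have hBmem : ∀ x : Fin n, x ∈ B ↔ ∃ j : Fin n, (j : ℕ) < k ∧ w j = x := by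
    intro x; simp [hB, prefSet]
  have hw1B : w i₁ ∈ B := (hBmem _).2 ⟨i₁, by omega, rfl⟩
  have hw2B : w i₂ ∈ B := (hBmem _).2 ⟨i₂, by omega, rfl⟩
  have hw3B : w i₃ ∉ B := by
    rw [hBmem]; rintro ⟨j, hj, hje⟩
    have hji : j = i₃ := w.injective hje
    rw [hji] at hj
    have : (i₂ : ℕ) < (i₃ : ℕ) := h23
    omega
  have hw4B : w i₄ ∉ B := by
    rw [hBmem]; rintro ⟨j, hj, hje⟩
    have hji : j = i₄ := w.injective hje
    rw [hji] at hj
    have : (i₂ : ℕ) < (i₄ : ℕ) := lt_trans h23 h34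
    omega
  show (A ∩ B).card + 2 ≤ k
  by_cases hc : (w i₁ : ℕ) < k
  · -- w i₃, w i₄ ∈ A, not in B
    have h3A : w i₃ ∈ A := (hAmem _).2 (by have : (w i₃ : ℕ) < (w i₁:ℕ) := lt_trans h1 h2; omega)
    have h4A : w i₄ ∈ A := (hAmem _).2 (by have : (w i₄ : ℕ) < (w i₁:ℕ) := h2; omega)
    have hsub : A ∩ B ⊆ A \ {w i₃, w i₄} := by
      intro x hx
      rcases Finset.mem_inter.mp hx with ⟨hxA, hxB⟩
      refine Finset.mem_sdiff.2 ⟨hxA, ?_⟩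
      simp only [Finset.mem_insert, Finset.mem_singleton]
      rintro (rfl | rfl)
      · exact hw3B hxB
      · exact hw4B hxB
    have hpair : ({w i₃, w i₄} : Finset (Fin n)) ⊆ A := by
      intro x hx; simp only [Finset.mem_insert, Finset.mem_singleton] at hx
      rcases hx with rfl | rfl <;> assumption
    have hcardpair : ({w i₃, w i₄} : Finset (Fin n)).card = 2 := by
      exact Finset.card_pair (ne_of_lt h1)
    have := Finset.card_le_card hsub
    rw [Finset.card_sdiff_of_subset hpair, hcardpair, card_prefSet _ _ hkn] at this
    omega
  · -- w i₁, w i₂ ∉ A, in B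
    have h1A : w i₁ ∉ A := by rw [hAmem]; omega
    have h2A : w i₂ ∉ A := by
      rw [hAmem]; have : (w i₁ : ℕ) < (w i₂ : ℕ) := h3; omega
    have hsub : A ∩ B ⊆ B \ {w i₁, w i₂} := by
      intro x hx
      rcases Finset.mem_inter.mp hx with ⟨hxA, hxB⟩
      refine Finset.mem_sdiff.2 ⟨hxB, ?_⟩
      simp only [Finset.mem_insert, Finset.mem_singleton]
      rintro (rfl | rfl)
      · exact h1A hxA
      · exact h2A hxA
    have hpair : ({w i₁, w i₂} : Finset (Fin n)) ⊆ B := by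
      intro x hx; simp only [Finset.mem_insert, Finset.mem_singleton] at hx
      rcases hx with rfl | rfl <;> assumption
    have hcardpair : ({w i₁, w i₂} : Finset (Fin n)).card = 2 := by
      exact Finset.card_pair (ne_of_lt h3)
    have := Finset.card_le_card hsub
    rw [Finset.card_sdiff_of_subset hpair, hcardpair, card_prefSet _ _ hkn] at this
    omega
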